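/- Let H be a Hilbert space, Φ = [φ₁, …, φ_n] with φ_i ∈ H, and let P_Φ be the orthogonal projection onto span{φ₁,…,φ_n}. For w̄ ∈ H define y(x) := ⟨φ(x), w̄⟩ and f_KR(x) := ⟨φ(x), P_Φ w̄⟩ where φ(x) ∈ H. Then for any probability measure on x, E_x (y(x) − f_KR(x))² = ⟨(I − P_Φ) w̄, Σ (I − P_Φ) w̄⟩ where Σ := E_x [φ(x) ⊗ φ(x)] is the (uncentered) covariance operator, and in particular E_x(y − f_KR)² ≤ ∥w̄∥² · ∥(I − P_Φ) Σ (I − P_Φ)∥. -/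

import Mathlib

open MeasureTheory

/-- Generalization error of the minimum-norm kernel interpolant: with
`y(x) = ⟨φ(x), wbar⟩` and `f_KR(x) = ⟨φ(x), P_Φ wbar⟩`, where `P_Φ` is the orthogonal
projection onto `span{φ₁,…,φ_n}`, one has
`E_x (y − f_KR)² = ⟨(I−P)wbar, Σ (I−P)wbar⟩ ≤ ∥wbar∥² ∥(I−P) Σ (I−P)∥`. -/
theorem kernel_regression_generalization
    {H : Type*} [NormedAddCommGroup H] [InnerProductSpace ℝ H] [CompleteSpace H]
    {Ω : Type*} [MeasurableSpace Ω] (μ : Measure Ω) [IsProbabilityMeasure μ]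
    (n : ℕ) (φs : Fin n → H) (φ : Ω → H) (wbar : H)
    (P : H →L[ℝ] H)
    (hPmem : ∀ v, P v ∈ Submodule.span ℝ (Set.range φs))
    (hPfix : ∀ v ∈ Submodule.span ℝ (Set.range φs), P v = v)
    (hPsa : ∀ u v : H, (inner ℝ (P u) v : ℝ) = inner ℝ u (P v))
    (Sop : H →L[ℝ] H)
    (hSop : ∀ u v : H, (inner ℝ u (Sop v) : ℝ) =
        ∫ ω, (inner ℝ (φ ω) u : ℝ) * (inner ℝ (φ ω) v : ℝ) ∂μ)
    (hint : ∀ u v : H,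
        Integrable (fun ω => (inner ℝ (φ ω) u : ℝ) * (inner ℝ (φ ω) v : ℝ)) μ) :
    (∫ ω, ((inner ℝ (φ ω) wbar : ℝ) - (inner ℝ (φ ω) (P wbar) : ℝ)) ^ 2 ∂μ)
        = (inner ℝ (wbar - P wbar) (Sop (wbar - P wbar)) : ℝ) ∧
      (∫ ω, ((inner ℝ (φ ω) wbar : ℝ) - (inner ℝ (φ ω) (P wbar) : ℝ)) ^ 2 ∂μ)
        ≤ ‖wbar‖ ^ 2 *
            ‖(ContinuousLinearMap.id ℝ H - P).comp
              (Sop.comp (ContinuousLinearMap.id ℝ H - P))‖ := by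
  set u := wbar - P wbar with hu
  have hPP : P (P wbar) = P wbar := hPfix _ (hPmem wbar)
  have hPu : P u = 0 := by
    simp [hu, map_sub, hPP]
  have heq : (∫ ω, ((inner ℝ (φ ω) wbar : ℝ) - (inner ℝ (φ ω) (P wbar) : ℝ)) ^ 2 ∂μ)
      = (inner ℝ u (Sop u) : ℝ) := by
    rw [hSop u u]
    congr 1; funext ω
    have : (inner ℝ (φ ω) u : ℝ) = inner ℝ (φ ω) wbar - inner ℝ (φ ω) (P wbar) := by
      simp [hu, inner_sub_right]
    rw [← this]; ring
  refine ⟨heq, ?_⟩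
  rw [heq]
  set T := (ContinuousLinearMap.id ℝ H - P).comp
      (Sop.comp (ContinuousLinearMap.id ℝ H - P)) with hT
  have hIu : (ContinuousLinearMap.id ℝ H - P) u = u := by
    simp [ContinuousLinearMap.sub_apply, hPu]
  have hTu : (inner ℝ u (Sop u) : ℝ) = inner ℝ u (T u) := by
    have : T u = Sop u - P (Sop u) := by
      simp [hT, ContinuousLinearMap.comp_apply, ContinuousLinearMap.sub_apply, hPu]
    rw [this, inner_sub_right, ← hPsa, hPu]
    simp
  -- ‖u‖ ≤ ‖wbar‖: Pythagoras
  have hnorm : ‖u‖ ≤ ‖wbar‖ := by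
    have horth : (inner ℝ (P wbar) u : ℝ) = 0 := by
      rw [hPsa, hPu, inner_zero_right]
    have hpyth : ‖wbar‖ ^ 2 = ‖P wbar‖ ^ 2 + ‖u‖ ^ 2 := by
      have hw : wbar = P wbar + u := by simp [hu]
      have horth2 : (inner ℝ (P wbar) u : ℝ) = 0 := by
        rw [hPsa, hPu, inner_zero_right]
      calc ‖wbar‖ ^ 2 = ‖P wbar + u‖ ^ 2 := by rw [← hw]
        _ = ‖P wbar‖ ^ 2 + 2 * inner ℝ (P wbar) u + ‖u‖ ^ 2 := norm_add_sq_real _ _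
        _ = ‖P wbar‖ ^ 2 + ‖u‖ ^ 2 := by rw [horth2]; ring
    have h1 : ‖u‖ ^ 2 ≤ ‖wbar‖ ^ 2 := by nlinarith [sq_nonneg ‖P wbar‖]
    nlinarith [norm_nonneg u, norm_nonneg wbar]
  calc (inner ℝ u (Sop u) : ℝ) = inner ℝ u (T u) := hTu
    _ ≤ ‖u‖ * ‖T u‖ := real_inner_le_norm _ _
    _ ≤ ‖u‖ * (‖T‖ * ‖u‖) := by
        exact mul_le_mul_of_nonneg_left (T.le_opNorm u) (norm_nonneg u)
    _ ≤ ‖wbar‖ * (‖T‖ * ‖wbar‖) := by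
        have hT0 : (0:ℝ) ≤ ‖T‖ := norm_nonneg _
        have hmm := mul_le_mul hnorm hnorm (norm_nonneg u) (norm_nonneg wbar)
        nlinarith
    _ = ‖wbar‖ ^ 2 * ‖T‖ := by ring
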